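/- If the weight profile w is cumulatively ordered, then for every problem (P, q) the outcome of the serial dictatorship that processes the agents in weakly decreasing order of their weights is a w-popular matching. -/

import Mathlib

open scoped Classical

section Defs

variable {I O : Type} [Fintype I] [Fintype O]

/-- A mechanism maps each problem (preference profile, capacity profile) to an assignment. -/
abbrev Mechanism (I O : Type) : Type :=
  (I → LinearOrder (Option O)) → (O → ℕ) → I → Option O

/-- `x` is strictly preferred to `y` under the strict preference (linear order) `p`,
where `none` represents being unassigned (∅). -/
def Prefers (p : LinearOrder (Option O)) (x y : Option O) : Prop := p.lt y x

/-- A matching: each object `a` is assigned to at most `q a` agents. -/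
def IsMatching (q : O → ℕ) (μ : I → Option O) : Prop :=
  ∀ a : O, (Finset.univ.filter fun i : I => μ i = some a).card ≤ q a

/-- Every object has capacity at least one. -/
def ValidCaps (q : O → ℕ) : Prop := ∀ a : O, 1 ≤ q a

/-- `μ` is more w-popular than `μ'`. -/
def MoreWPopular (w : I → ℝ) (P : I → LinearOrder (Option O)) (μ μ' : I → Option O) : Prop :=
  (∑ j ∈ Finset.univ.filter fun j : I => Prefers (P j) (μ' j) (μ j), w j)
    < ∑ i ∈ Finset.univ.filter fun i : I => Prefers (P i) (μ i) (μ' i), w i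

/-- `μ` is a w-popular matching for problem `(P, q)`. -/
def WPopular (w : I → ℝ) (P : I → LinearOrder (Option O)) (q : O → ℕ)
    (μ : I → Option O) : Prop :=
  IsMatching q μ ∧ ∀ μ', IsMatching q μ' → ¬ MoreWPopular w P μ' μ

/-- `μ` is more popular than `μ'` (unweighted, counting agents). -/
def MorePopular (P : I → LinearOrder (Option O)) (μ μ' : I → Option O) : Prop :=
  (Finset.univ.filter fun j : I => Prefers (P j) (μ' j) (μ j)).card
    < (Finset.univ.filter fun i : I => Prefers (P i) (μ i) (μ' i)).card

/-- `μ` is a popular matching for problem `(P, q)`. -/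
def Popular (P : I → LinearOrder (Option O)) (q : O → ℕ) (μ : I → Option O) : Prop :=
  IsMatching q μ ∧ ∀ μ', IsMatching q μ' → ¬ MorePopular P μ' μ

/-- `μ'` Pareto improves upon `μ`. -/
def ParetoImproves (P : I → LinearOrder (Option O)) (μ' μ : I → Option O) : Prop :=
  (∀ i : I, (P i).le (μ i) (μ' i)) ∧ ∃ j : I, Prefers (P j) (μ' j) (μ j)

/-- `μ` is non-wasteful: no agent prefers an object with unfilled capacity to her assignment. -/
def NonWasteful (P : I → LinearOrder (Option O)) (q : O → ℕ) (μ : I → Option O) : Prop :=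
  ∀ (i : I) (a : O), (Finset.univ.filter fun j : I => μ j = some a).card < q a →
    ¬ Prefers (P i) (some a) (μ i)

/-- The enumeration `e` lists the agents in weakly decreasing order of weight. -/
def DecreasingEnum (w : I → ℝ) (e : Fin (Fintype.card I) ≃ I) : Prop :=
  ∀ j k : Fin (Fintype.card I), j ≤ k → w (e k) ≤ w (e j)

/-- The weight profile is cumulatively ordered (w.r.t. the decreasing enumeration `e`):
each agent's weight is at least the sum of the weights of all later agents. -/
def CumulativelyOrdered (w : I → ℝ) (e : Fin (Fintype.card I) ≃ I) : Prop :=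
  ∀ j : Fin (Fintype.card I),
    (∑ k ∈ Finset.univ.filter fun k : Fin (Fintype.card I) => j < k, w (e k)) ≤ w (e j)

/-- All weights are pairwise different. -/
def DistinctWeights (w : I → ℝ) : Prop := Function.Injective w

/-- Essentially distinct (w.r.t. the decreasing enumeration `e`): all weights except possibly
the last two are pairwise different, the last two are equal, and the third-from-last weight is
at least the sum of the last two.  (Paper indices `i_1, …, i_n` correspond to `e 0, …, e (n-1)`.) -/
def EssentiallyDistinct (w : I → ℝ) (e : Fin (Fintype.card I) ≃ I) : Prop :=
  (∀ j k : Fin (Fintype.card I), j < k → (k : ℕ) + 2 ≤ Fintype.card I → w (e j) ≠ w (e k)) ∧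
  (∀ j k : Fin (Fintype.card I), (j : ℕ) + 2 = Fintype.card I → (k : ℕ) + 1 = Fintype.card I →
    w (e j) = w (e k)) ∧
  (∀ j k l : Fin (Fintype.card I), (j : ℕ) + 3 = Fintype.card I →
    (k : ℕ) + 2 = Fintype.card I → (l : ℕ) + 1 = Fintype.card I →
    w (e k) + w (e l) ≤ w (e j))

/-- The most preferred element (under `p`) of `{∅} ∪ {objects with remaining capacity}`. -/
noncomputable def sdChoice (p : LinearOrder (Option O)) (rem : O → ℕ) : Option O :=
  @Finset.max' (Option O) p
    (insert none ((Finset.univ.filter fun a : O => 0 < rem a).image some))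
    ⟨none, Finset.mem_insert_self _ _⟩

/-- State of the serial dictatorship after the first `k` agents (in the order `e`) have picked:
the partial assignment and the remaining capacities. -/
noncomputable def sdState (e : Fin (Fintype.card I) ≃ I)
    (P : I → LinearOrder (Option O)) (q : O → ℕ) : ℕ → (I → Option O) × (O → ℕ)
  | 0 => (fun _ => none, q)
  | k + 1 =>
    let prev := sdState e P q k
    if h : k < Fintype.card I then
      let i := e ⟨k, h⟩
      let c := sdChoice (P i) prev.2
      (Function.update prev.1 i c, fun a => if c = some a then prev.2 a - 1 else prev.2 a)
    else prev

/-- The outcome of the serial dictatorship with agent ordering `e` at problem `(P, q)`: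
agents pick, one by one in the order `e`, their most preferred acceptable object with
remaining capacity (and get ∅ if none remains). -/
noncomputable def SD (e : Fin (Fintype.card I) ≃ I)
    (P : I → LinearOrder (Option O)) (q : O → ℕ) : I → Option O :=
  (sdState e P q (Fintype.card I)).1

/-- An agent ordering is consistent with the weight profile `w` if agents with strictly larger
weight come strictly earlier. -/
def ConsistentOrder (w : I → ℝ) (e : Fin (Fintype.card I) ≃ I) : Prop :=
  ∀ i j : I, w j < w i → e.symm i < e.symm j

/-- A mechanism always produces a matching. -/
def IsMechanism (ψ : Mechanism I O) : Prop :=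
  ∀ P q, ValidCaps q → IsMatching q (ψ P q)

/-- Strategy-proofness: no agent can ever obtain a strictly preferred assignment
by misreporting. -/
def StrategyProof (ψ : Mechanism I O) : Prop :=
  ∀ P q, ValidCaps q → ∀ (i : I) (P'i : LinearOrder (Option O)),
    ¬ Prefers (P i) (ψ (Function.update P i P'i) q i) (ψ P q i)

/-- A mechanism is w-popular if its outcome is w-popular whenever a w-popular matching exists. -/
def WPopularMech (w : I → ℝ) (ψ : Mechanism I O) : Prop :=
  ∀ P q, ValidCaps q → (∃ μ, WPopular w P q μ) → WPopular w P q (ψ P q)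

/-- A mechanism is popular if its outcome is popular whenever a popular matching exists. -/
def PopularMech (ψ : Mechanism I O) : Prop :=
  ∀ P q, ValidCaps q → (∃ μ, Popular P q μ) → Popular P q (ψ P q)

/-- A mechanism is non-wasteful if its outcome is always non-wasteful. -/
def NonWastefulMech (ψ : Mechanism I O) : Prop :=
  ∀ P q, ValidCaps q → NonWasteful P q (ψ P q)

/-- `p` declares `a` as its only acceptable object (the class 𝒫ₐ). -/
def OnlyAcceptable (p : LinearOrder (Option O)) (a : O) : Prop :=
  p.lt none (some a) ∧ ∀ b : O, b ≠ a → p.lt (some b) none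

/-- `p` declares no object acceptable (the class 𝒫_∅). -/
def NothingAcceptable (p : LinearOrder (Option O)) : Prop :=
  ∀ b : O, p.lt (some b) none

/-- Preserving dispute resolutions. -/
def PreservesDisputeResolutions (ψ : Mechanism I O) : Prop :=
  ∀ P q, ValidCaps q → ∀ (i j : I) (a : O) (P'i : LinearOrder (Option O)),
    ψ P q j = some a → Prefers (P i) (some a) (ψ P q i) →
    OnlyAcceptable P'i a → ψ (Function.update P i P'i) q i = none →
    ∀ (P'' : I → LinearOrder (Option O)) (q' : O → ℕ), ValidCaps q' → q' a = 1 →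
      OnlyAcceptable (P'' i) a → OnlyAcceptable (P'' j) a →
      (∀ k : I, k ≠ i → k ≠ j → NothingAcceptable (P'' k)) →
      ψ P'' q' i = none ∧ ψ P'' q' j = some a

/-- `P'` is a (pure) Nash equilibrium of the preference-reporting game induced by `ψ`
at the problem `(P, q)` (true preferences `P`). -/
def NashEq (ψ : Mechanism I O) (P : I → LinearOrder (Option O)) (q : O → ℕ)
    (P' : I → LinearOrder (Option O)) : Prop :=
  ∀ (i : I) (P''i : LinearOrder (Option O)),
    ¬ Prefers (P i) (ψ (Function.update P' i P''i) q i) (ψ P' q i)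

/-- The mechanism admits a Nash equilibrium at every problem. -/
def AdmitsNash (ψ : Mechanism I O) : Prop :=
  ∀ P q, ValidCaps q → ∃ P', NashEq ψ P q P'

/-- w-popularity in equilibrium: every Nash-equilibrium outcome is w-popular
whenever a w-popular matching exists. -/
def WPopularInEquilibrium (w : I → ℝ) (ψ : Mechanism I O) : Prop :=
  ∀ P q, ValidCaps q → ∀ P', NashEq ψ P q P' →
    (∃ μ, WPopular w P q μ) → WPopular w P q (ψ P' q)

end Defs

section Aux
variable {I O : Type} [Fintype I] [Fintype O]
  (e : Fin (Fintype.card I) ≃ I) (P : I → LinearOrder (Option O)) (q : O → ℕ)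

lemma sdState_succ (k : ℕ) (h : k < Fintype.card I) :
    sdState e P q (k+1) =
      (Function.update (sdState e P q k).1 (e ⟨k,h⟩)
         (sdChoice (P (e ⟨k,h⟩)) (sdState e P q k).2),
       fun a => if sdChoice (P (e ⟨k,h⟩)) (sdState e P q k).2 = some a
                then (sdState e P q k).2 a - 1 else (sdState e P q k).2 a) := by
  simp only [sdState, dif_pos h]

lemma sdState_succ_ge (k : ℕ) (h : ¬ k < Fintype.card I) :
    sdState e P q (k+1) = sdState e P q k := by
  simp only [sdState, dif_neg h]

lemma sdState_none (k : ℕ) (j : Fin (Fintype.card I)) (hj : k ≤ (j : ℕ)) :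
    (sdState e P q k).1 (e j) = none := by
  induction k with
  | zero => rfl
  | succ k ih =>
    have h : k < Fintype.card I := lt_of_le_of_lt (by omega) j.isLt
    rw [sdState_succ e P q k h]
    have hne : e j ≠ e ⟨k, h⟩ := by
      intro hej
      have : (j : ℕ) = k := congrArg Fin.val (e.injective hej)
      omega
    simp only
    rw [Function.update_of_ne hne, ih (by omega)]

lemma sdState_stable (k : ℕ) (j : Fin (Fintype.card I)) (hj : (j : ℕ) < k) :
    (sdState e P q k).1 (e j) = (sdState e P q ((j : ℕ) + 1)).1 (e j) := by
  induction k with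
  | zero => omega
  | succ k ih =>
    rcases Nat.lt_or_ge (j : ℕ) k with h | h
    · rw [← ih h]
      by_cases hk : k < Fintype.card I
      · rw [sdState_succ e P q k hk]
        have hne : e j ≠ e ⟨k, hk⟩ := by
          intro hej
          have : (j : ℕ) = k := congrArg Fin.val (e.injective hej)
          omega
        simp only
        rw [Function.update_of_ne hne]
      · rw [sdState_succ_ge e P q k hk]
    · have hjk : (j : ℕ) = k := by omega
      rw [show k + 1 = (j : ℕ) + 1 by omega]

lemma SD_eq (j : Fin (Fintype.card I)) :
    SD e P q (e j) = sdChoice (P (e j)) ((sdState e P q (j : ℕ)).2) := by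
  show (sdState e P q (Fintype.card I)).1 (e j) = _
  rw [sdState_stable e P q _ j j.isLt, sdState_succ e P q _ j.isLt]
  simp only
  rw [show (⟨(j : ℕ), j.isLt⟩ : Fin (Fintype.card I)) = j from rfl,
    Function.update_self]

lemma sdChoice_mem (p : LinearOrder (Option O)) (rem : O → ℕ) :
    sdChoice p rem ∈
      insert none ((Finset.univ.filter fun a : O => 0 < rem a).image some) :=
  Finset.max'_mem _ _

lemma le_sdChoice (p : LinearOrder (Option O)) (rem : O → ℕ) (x : Option O)
    (hx : x ∈ insert none ((Finset.univ.filter fun a : O => 0 < rem a).image some)) :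
    p.le x (sdChoice p rem) :=
  Finset.le_max' _ x hx

lemma sdState_card (k : ℕ) (a : O) :
    (Finset.univ.filter fun i : I => (sdState e P q k).1 i = some a).card
      + (sdState e P q k).2 a = q a := by
  induction k with
  | zero =>
    simp only [sdState]
    simp
  | succ k ih =>
    by_cases h : k < Fintype.card I
    · rw [sdState_succ e P q k h]
      set i0 := e ⟨k, h⟩ with hi0
      set c := sdChoice (P i0) (sdState e P q k).2 with hc
      have hprev : (sdState e P q k).1 i0 = none := sdState_none e P q k ⟨k, h⟩ le_rfl
      simp only
      by_cases hca : c = some a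
      · have hrem : 0 < (sdState e P q k).2 a := by
          have hm := sdChoice_mem (P i0) (sdState e P q k).2
          rw [← hc, hca] at hm
          rcases Finset.mem_insert.1 hm with h' | h'
          · exact absurd h'.symm (by simp)
          · rcases Finset.mem_image.1 h' with ⟨b, hb, hba⟩
            obtain rfl : b = a := by injection hba
            exact (Finset.mem_filter.1 hb).2
        have hfil : (Finset.univ.filter fun i : I =>
            Function.update (sdState e P q k).1 i0 c i = some a)
            = insert i0 (Finset.univ.filter fun i : I => (sdState e P q k).1 i = some a) := by
          ext i
          simp only [Finset.mem_filter, Finset.mem_univ, true_and, Finset.mem_insert]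
          by_cases hi : i = i0
          · subst hi
            simp [Function.update_self, hca]
          · rw [Function.update_of_ne hi]
            simp [hi]
        rw [hfil, Finset.card_insert_of_notMem (by
          simp only [Finset.mem_filter, Finset.mem_univ, true_and, hprev]
          simp), if_pos hca]
        omega
      · have hfil : (Finset.univ.filter fun i : I =>
            Function.update (sdState e P q k).1 i0 c i = some a)
            = (Finset.univ.filter fun i : I => (sdState e P q k).1 i = some a) := by
          ext i
          simp only [Finset.mem_filter, Finset.mem_univ, true_and]
          by_cases hi : i = i0
          · subst hi
            rw [Function.update_self, hprev]
            simp [hca]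
          · rw [Function.update_of_ne hi]
        rw [hfil, if_neg hca]
        exact ih
    · rw [sdState_succ_ge e P q k h]; exact ih

lemma SD_isMatching (hq : ValidCaps q) : IsMatching q (SD e P q) := by
  intro a
  have := sdState_card e P q (Fintype.card I) a
  show (Finset.univ.filter fun i : I =>
    (sdState e P q (Fintype.card I)).1 i = some a).card ≤ q a
  omega

end Aux
section Aux2
variable {I O : Type} [Fintype I] [Fintype O]
  (e : Fin (Fintype.card I) ≃ I) (P : I → LinearOrder (Option O)) (q : O → ℕ)

lemma SD_prefix_le (μ' : I → Option O) (hμ' : IsMatching q μ')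
    (j0 : Fin (Fintype.card I))
    (hpre : ∀ j : Fin (Fintype.card I), j < j0 → μ' (e j) = SD e P q (e j)) :
    (P (e j0)).le (μ' (e j0)) (SD e P q (e j0)) := by
  rw [SD_eq]
  apply le_sdChoice
  cases hx : μ' (e j0) with
  | none => exact Finset.mem_insert_self _ _
  | some a =>
    apply Finset.mem_insert_of_mem
    apply Finset.mem_image_of_mem
    simp only [Finset.mem_filter, Finset.mem_univ, true_and]
    have hcard := sdState_card e P q (j0 : ℕ) a
    have hsub : insert (e j0)
        (Finset.univ.filter fun i : I => (sdState e P q (j0 : ℕ)).1 i = some a)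
        ⊆ Finset.univ.filter fun i : I => μ' i = some a := by
      intro i hi
      rcases Finset.mem_insert.1 hi with rfl | hi
      · simp [hx]
      · simp only [Finset.mem_filter, Finset.mem_univ, true_and] at hi ⊢
        set j := e.symm i with hjdef
        have hie : e j = i := e.apply_symm_apply i
        by_cases hlt : j < j0
        · rw [← hie] at hi ⊢
          rw [hpre j hlt]
          rw [sdState_stable e P q _ j hlt] at hi
          have h2 : SD e P q (e j) = (sdState e P q ((j : ℕ) + 1)).1 (e j) :=
            sdState_stable e P q (Fintype.card I) j j.isLt
          rw [h2]
          exact hi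
        · exfalso
          rw [← hie, sdState_none e P q _ j (Fin.not_lt.mp hlt)] at hi
          simp at hi
    have hnotmem : e j0 ∉
        (Finset.univ.filter fun i : I => (sdState e P q (j0 : ℕ)).1 i = some a) := by
      simp [sdState_none e P q _ j0 le_rfl]
    have hc1 := Finset.card_le_card hsub
    rw [Finset.card_insert_of_notMem hnotmem] at hc1
    have hc2 := hμ' a
    omega

end Aux2
/-- Under cumulatively ordered weights, the serial dictatorship following the
weakly decreasing weight order produces a w-popular matching at every problem. -/
theorem stmt3 {I O : Type} [Fintype I] [Fintype O]
    (hI : 3 ≤ Fintype.card I) (hIO : Fintype.card I ≤ Fintype.card O)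
    (w : I → ℝ) (hw : ∀ i, 0 < w i)
    (e : Fin (Fintype.card I) ≃ I) (he : DecreasingEnum w e)
    (hco : CumulativelyOrdered w e)
    (P : I → LinearOrder (Option O)) (q : O → ℕ) (hq : ValidCaps q) :
    WPopular w P q (SD e P q) := by
  set μ := SD e P q with hμdef
  refine ⟨SD_isMatching e P q hq, ?_⟩
  intro μ' hμ' hmore
  unfold MoreWPopular at hmore
  by_cases hall : ∀ j : Fin (Fintype.card I), μ' (e j) = μ (e j)
  · have hall' : ∀ i : I, μ' i = μ i := by
      intro i
      have := hall (e.symm i)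
      rwa [e.apply_symm_apply] at this
    have h1 : (Finset.univ.filter fun i : I => Prefers (P i) (μ' i) (μ i)) = ∅ := by
      apply Finset.filter_false_of_mem
      intro i _
      rw [hall' i]
      letI := P i
      exact lt_irrefl _
    have h2 : (Finset.univ.filter fun j : I => Prefers (P j) (μ j) (μ' j)) = ∅ := by
      apply Finset.filter_false_of_mem
      intro i _
      rw [hall' i]
      letI := P i
      exact lt_irrefl _
    rw [h1, h2] at hmore
    simp at hmore
  · push_neg at hall
    set T := Finset.univ.filter
      (fun j : Fin (Fintype.card I) => μ' (e j) ≠ μ (e j)) with hTdef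
    have hTne : T.Nonempty := by
      obtain ⟨j, hj⟩ := hall
      exact ⟨j, by simp [hTdef, hj]⟩
    set j0 := T.min' hTne with hj0def
    have hpre : ∀ j : Fin (Fintype.card I), j < j0 → μ' (e j) = μ (e j) := by
      intro j hj
      by_contra hne
      have hjT : j ∈ T := by simp [hTdef, hne]
      exact absurd (T.min'_le j hjT) (not_le.mpr hj)
    have hj0ne : μ' (e j0) ≠ μ (e j0) :=
      (Finset.mem_filter.1 (T.min'_mem hTne)).2
    have hle := SD_prefix_le e P q μ' hμ' j0 hpre
    have hlt : Prefers (P (e j0)) (μ (e j0)) (μ' (e j0)) := by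
      letI := P (e j0)
      exact lt_of_le_of_ne hle hj0ne
    set A := Finset.univ.filter (fun j : I => Prefers (P j) (μ j) (μ' j)) with hAdef
    set A' := Finset.univ.filter (fun i : I => Prefers (P i) (μ' i) (μ i)) with hA'def
    have hj0A : e j0 ∈ A := by simp [hAdef, hlt]
    have step2 : w (e j0) ≤ ∑ j ∈ A, w j :=
      Finset.single_le_sum (fun i _ => (hw i).le) hj0A
    have step3 := hco j0
    set C := Finset.univ.filter
      (fun k : Fin (Fintype.card I) => j0 < k) with hCdef
    have himg : ∑ k ∈ A'.image e.symm, w (e k) = ∑ i ∈ A', w i := by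
      rw [Finset.sum_image (fun x _ y _ h => e.symm.injective h)]
      exact Finset.sum_congr rfl (fun i _ => by rw [e.apply_symm_apply])
    have hsub : A'.image e.symm ⊆ C := by
      intro k hk
      rcases Finset.mem_image.1 hk with ⟨i, hi, rfl⟩
      rw [hA'def] at hi
      simp only [Finset.mem_filter, Finset.mem_univ, true_and] at hi
      simp only [hCdef, Finset.mem_filter, Finset.mem_univ, true_and]
      have hne : μ' i ≠ μ i := by
        intro h
        rw [h] at hi
        letI := P i
        exact lt_irrefl _ hi
      have hmemT : e.symm i ∈ T := by
        simp only [hTdef, Finset.mem_filter, Finset.mem_univ, true_and,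
          e.apply_symm_apply]
        exact hne
      have hge := T.min'_le _ hmemT
      rcases lt_or_eq_of_le hge with h | h
      · exact h
      · exfalso
        have hieq : e (T.min' hTne) = i := by
          rw [h, e.apply_symm_apply]
        have hieq2 : i = e j0 := hieq.symm
        rw [hieq2] at hi
        letI := P (e j0)
        exact lt_asymm hi hlt
    have step4 : ∑ i ∈ A', w i ≤ ∑ k ∈ C, w (e k) := by
      rw [← himg]
      exact Finset.sum_le_sum_of_subset_of_nonneg hsub (fun k _ _ => (hw (e k)).le)
    have : ∑ i ∈ A', w i ≤ ∑ j ∈ A, w j :=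
      le_trans step4 (le_trans step3 step2)
    exact absurd hmore (not_lt.mpr this)
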